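/- arXiv:1003.0588 — 2 statements merged into one kernel-verified Lean document; each statement's English description precedes it below -/
import Mathlib

section
/- Let T be a Turing machine whose column subshift S_H (over alphabet A ⊔ (A×Q), observing cell 0 of T_H) is sofic, recognized by a finite automaton with N states. Then T cannot make an N-cycle of width N on any configuration; in particular T is n-bounded-cycle for some n. -/
/-- A Turing machine with tape alphabet `A`, state set `Q`, and rule
`δ : A × Q → A × Q × {-1,1}` (the direction is encoded by a `Bool`). -/
structure TuringMachine (A Q : Type*) where
  δ : A → Q → A × Q × Bool

namespace TuringMachine

variable {A Q : Type*}

/-- Direction of a move: `true ↦ +1`, `false ↦ -1`. -/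
def dir (b : Bool) : ℤ := if b then 1 else -1

/-- A configuration: tape contents, head state, head position. -/
abbrev Config (A Q : Type*) := (ℤ → A) × Q × ℤ

/-- One step of the machine on `X = A^ℤ × Q × ℤ`. -/
def step (M : TuringMachine A Q) (c : Config A Q) : Config A Q :=
  let r := M.δ (c.1 c.2.2) c.2.1
  (Function.update c.1 c.2.2 r.1, r.2.1, c.2.2 + dir r.2.2)

/-- Head position after `t` steps. -/
def pos (M : TuringMachine A Q) (t : ℕ) (c : Config A Q) : ℤ :=
  ((M.step)^[t] c).2.2

/-- `c` is preperiodic for the machine. -/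
def Preperiodic (M : TuringMachine A Q) (c : Config A Q) : Prop :=
  ∃ m p : ℕ, 0 < p ∧ (M.step)^[m + p] c = (M.step)^[m] c

end TuringMachine

namespace TuringMachine

variable {A Q : Type*}

/-- Alphabet of the moving-head system: a tape letter, or a tape letter marked
with the head together with its state. -/
abbrev Cell (A Q : Type*) := A ⊕ (A × Q)

/-- A cell carries the head. -/
def isHead {A Q : Type*} (b : Cell A Q) : Prop := ∃ p : A × Q, b = Sum.inr p

/-- Membership in the moving-head phase space X_H: at most one marked cell. -/
def XHmem (x : ℤ → Cell A Q) : Prop :=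
  Set.Subsingleton {i : ℤ | isHead (x i)}

/-- One step of the moving-head system T_H on (A ⊔ (A × Q))^ℤ: if there is a
head, apply the rule of the machine at the marked cell (write, change state, and
move the mark by ±1); otherwise do nothing. -/
noncomputable def hstep (M : TuringMachine A Q) (x : ℤ → Cell A Q) :
    ℤ → Cell A Q := by
  classical
  exact if h : ∃ i : ℤ, ∃ b : A, ∃ q : Q, x i = Sum.inr (b, q) then
    let i := h.choose
    let b := h.choose_spec.choose
    let q := h.choose_spec.choose_spec.choose
    let r := M.δ b q
    let y := Function.update x i (Sum.inl r.1)
    let j := i + dir r.2.2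
    Function.update y j
      (match y j with
        | Sum.inl c => Sum.inr (c, r.2.1)
        | Sum.inr (c, _) => Sum.inr (c, r.2.1))
  else x

/-- The column observed at cell 0, defining the subshift S_H. -/
noncomputable def tauH (M : TuringMachine A Q) (x : ℤ → Cell A Q) (t : ℕ) :
    Cell A Q :=
  ((M.hstep)^[t] x) 0

/-- The language of finite factors of the column subshift S_H. -/
noncomputable def langSH (M : TuringMachine A Q) : Language (Cell A Q) :=
  {w : List (Cell A Q) | ∃ x : ℤ → Cell A Q, XHmem x ∧ ∃ m : ℕ,
    ∀ j : ℕ, ∀ hj : j < w.length, w.get ⟨j, hj⟩ = M.tauH x (m + j)}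

end TuringMachine

namespace TuringMachine

/-- The machine makes an n-cycle of width N over configuration x and cell i:
there are times 0 = t_0 < t_1 < … < t_{2n} with the head at i at each even-indexed
time and outside [i-N, i+N] at each odd-indexed time. -/
def NCycle {A Q : Type*} (M : TuringMachine A Q) (n N : ℕ)
    (x : Config A Q) (i : ℤ) : Prop :=
  ∃ ts : ℕ → ℕ, ts 0 = 0 ∧ (∀ j < 2 * n, ts j < ts (j + 1)) ∧
    (∀ q ≤ n, M.pos (ts (2 * q)) x = i) ∧
    (∀ q < n, (N : ℤ) < |M.pos (ts (2 * q + 1)) x - i|)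

end TuringMachine

namespace TuringMachine

variable {A Q : Type*}

-- ============ new material ============

lemma dir_ne_zero (b : Bool) : dir b ≠ 0 := by cases b <;> simp [dir]

lemma abs_dir (b : Bool) : |dir b| = 1 := by cases b <;> simp [dir]

/-- Embedding of a machine configuration into the moving-head system. -/
def ofConfig (c : Config A Q) : ℤ → Cell A Q :=
  fun k => if k = c.2.2 then Sum.inr (c.1 k, c.2.1) else Sum.inl (c.1 k)

def extractCell : Cell A Q → A
  | Sum.inl a => a
  | Sum.inr p => p.1

lemma XHmem_ofConfig (c : Config A Q) : XHmem (ofConfig c) := by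
  intro i hi j hj
  simp only [Set.mem_setOf_eq, isHead, ofConfig] at hi hj
  split_ifs at hi with h1
  · split_ifs at hj with h2
    · rw [h1, h2]
    · obtain ⟨p, hp⟩ := hj; simp at hp
  · obtain ⟨p, hp⟩ := hi; simp at hp

lemma step_eq (M : TuringMachine A Q) (c : Config A Q) :
    M.step c = (Function.update c.1 c.2.2 (M.δ (c.1 c.2.2) c.2.1).1,
      (M.δ (c.1 c.2.2) c.2.1).2.1, c.2.2 + dir (M.δ (c.1 c.2.2) c.2.1).2.2) := rfl

lemma hstep_aux (M : TuringMachine A Q) (c : Config A Q) (i0 : ℤ) (b0 : A) (q0 : Q)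
    (h1 : i0 = c.2.2) (h2 : b0 = c.1 c.2.2) (h3 : q0 = c.2.1) :
    (let r := M.δ b0 q0;
     let y := Function.update (ofConfig c) i0 (Sum.inl r.1);
     let j := i0 + dir r.2.2;
     Function.update y j
      (match y j with
        | Sum.inl a => Sum.inr (a, r.2.1)
        | Sum.inr (a, _) => Sum.inr (a, r.2.1))) = ofConfig (M.step c) := by
  subst h1 h2 h3
  set r := M.δ (c.1 c.2.2) c.2.1 with hr
  have hne : c.2.2 + dir r.2.2 ≠ c.2.2 := by
    have := dir_ne_zero r.2.2; omega
  have hscrut : Function.update (ofConfig c) c.2.2 (Sum.inl r.1) (c.2.2 + dir r.2.2)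
      = Sum.inl (c.1 (c.2.2 + dir r.2.2)) := by
    rw [Function.update_of_ne hne]
    exact if_neg hne
  show Function.update (Function.update (ofConfig c) c.2.2 (Sum.inl r.1)) (c.2.2 + dir r.2.2)
      (match Function.update (ofConfig c) c.2.2 (Sum.inl r.1) (c.2.2 + dir r.2.2) with
        | Sum.inl a => Sum.inr (a, r.2.1)
        | Sum.inr (a, _) => Sum.inr (a, r.2.1)) = ofConfig (M.step c)
  rw [hscrut]
  funext k
  have hstep2 : (M.step c).2.2 = c.2.2 + dir r.2.2 := rfl
  have hstep1 : (M.step c).1 = Function.update c.1 c.2.2 r.1 := rfl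
  have hstepq : (M.step c).2.1 = r.2.1 := rfl
  simp only [Function.update_apply, ofConfig, hstep1, hstep2, hstepq]
  by_cases hk1 : k = c.2.2 + dir r.2.2
  · simp [hk1, if_neg hne, Function.update_apply, if_neg (dir_ne_zero r.2.2)]
  · by_cases hk2 : k = c.2.2
    · simp [hk2, if_neg hne, Function.update_apply, if_neg (Ne.symm hne), hk1,
        if_neg (dir_ne_zero r.2.2)]
    · simp [hk1, hk2, Function.update_apply]

lemma hstep_ofConfig (M : TuringMachine A Q) (c : Config A Q) :
    M.hstep (ofConfig c) = ofConfig (M.step c) := by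
  classical
  have hex : ∃ i : ℤ, ∃ b : A, ∃ q : Q, ofConfig c i = Sum.inr (b, q) :=
    ⟨c.2.2, c.1 c.2.2, c.2.1, by simp [ofConfig]⟩
  have hspec : ofConfig c hex.choose =
      Sum.inr (hex.choose_spec.choose, hex.choose_spec.choose_spec.choose) :=
    hex.choose_spec.choose_spec.choose_spec
  have hch : hex.choose = c.2.2 := by
    by_contra hne
    have h2 : ¬ isHead (ofConfig c hex.choose) := by
      rw [show ofConfig c hex.choose = Sum.inl (c.1 hex.choose) from if_neg hne]
      simp [isHead]
    exact h2 ⟨_, hspec⟩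
  have hval : ofConfig c hex.choose = Sum.inr (c.1 c.2.2, c.2.1) := by
    rw [hch]; simp [ofConfig]
  have hinj := hval.symm.trans hspec
  have hb1 : hex.choose_spec.choose = c.1 c.2.2 := by
    injection hinj with h'; exact ((Prod.mk.injEq _ _ _ _ ▸ h').1).symm
  have hb2 : hex.choose_spec.choose_spec.choose = c.2.1 := by
    injection hinj with h'; exact ((Prod.mk.injEq _ _ _ _ ▸ h').2).symm
  unfold hstep
  rw [dif_pos hex]
  exact hstep_aux M c _ _ _ hch hb1 hb2

lemma hstep_iterate_ofConfig (M : TuringMachine A Q) (c : Config A Q) (t : ℕ) :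
    (M.hstep)^[t] (ofConfig c) = ofConfig ((M.step)^[t] c) := by
  induction t with
  | zero => rfl
  | succ n ih =>
      rw [Function.iterate_succ_apply', Function.iterate_succ_apply', ih, hstep_ofConfig]

lemma tauH_ofConfig (M : TuringMachine A Q) (c : Config A Q) (t : ℕ) :
    M.tauH (ofConfig c) t = ofConfig ((M.step)^[t] c) 0 := by
  rw [tauH, hstep_iterate_ofConfig]

lemma hstep_no_head (M : TuringMachine A Q) (x : ℤ → Cell A Q)
    (h : ¬ ∃ i : ℤ, ∃ b : A, ∃ q : Q, x i = Sum.inr (b, q)) : M.hstep x = x := by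
  unfold hstep
  rw [dif_neg h]

lemma eq_ofConfig_of_head {x : ℤ → Cell A Q} (hX : XHmem x) {i0 : ℤ} {b : A} {q : Q}
    (hh : x i0 = Sum.inr (b, q)) :
    x = ofConfig (fun k => extractCell (x k), q, i0) := by
  funext k
  by_cases hk : k = i0
  · subst hk
    simp [ofConfig, hh, extractCell]
  · have hnh : ¬ isHead (x k) := by
      intro hhead
      exact hk (hX hhead ⟨(b, q), hh⟩)
    simp only [ofConfig, if_neg hk]
    rcases hxk : x k with a | p
    · simp [extractCell]
    · exact absurd ⟨p, hxk⟩ hnh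

lemma XHmem_hstep (M : TuringMachine A Q) {x : ℤ → Cell A Q} (hX : XHmem x) :
    XHmem (M.hstep x) := by
  by_cases h : ∃ i : ℤ, ∃ b : A, ∃ q : Q, x i = Sum.inr (b, q)
  · obtain ⟨i0, b, q, hh⟩ := h
    rw [eq_ofConfig_of_head hX hh, hstep_ofConfig]
    exact XHmem_ofConfig _
  · rw [hstep_no_head M x h]; exact hX

lemma XHmem_hstep_iterate (M : TuringMachine A Q) {x : ℤ → Cell A Q} (hX : XHmem x) (t : ℕ) :
    XHmem ((M.hstep)^[t] x) := by
  induction t with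
  | zero => exact hX
  | succ n ih => rw [Function.iterate_succ_apply']; exact XHmem_hstep M ih

/-- translation of a configuration -/
def transl (c : Config A Q) (i : ℤ) : Config A Q :=
  (fun k => c.1 (k + i), c.2.1, c.2.2 - i)

lemma step_transl (M : TuringMachine A Q) (c : Config A Q) (i : ℤ) :
    M.step (transl c i) = transl (M.step c) i := by
  have hread : (transl c i).1 (transl c i).2.2 = c.1 c.2.2 := by
    simp [transl, sub_add_cancel]
  rw [step_eq, step_eq, hread]
  refine Prod.ext ?_ (Prod.ext rfl ?_)
  · funext k
    simp only [transl, Function.update_apply]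
    by_cases hk : k = c.2.2 - i
    · rw [if_pos hk, if_pos (by omega : k + i = c.2.2)]
    · rw [if_neg hk, if_neg (by omega : ¬ k + i = c.2.2)]
  · show (transl c i).2.2 + _ = _
    simp only [transl]
    ring

lemma iterate_step_transl (M : TuringMachine A Q) (c : Config A Q) (i : ℤ) (t : ℕ) :
    (M.step)^[t] (transl c i) = transl ((M.step)^[t] c) i := by
  induction t with
  | zero => rfl
  | succ n ih =>
      rw [Function.iterate_succ_apply', Function.iterate_succ_apply', ih, step_transl]

lemma pos_step_abs (M : TuringMachine A Q) (c : Config A Q) :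
    |(M.step c).2.2 - c.2.2| = 1 := by
  rw [step_eq]
  simp [abs_dir]

lemma pos_lipschitz (M : TuringMachine A Q) (c : Config A Q) (t : ℕ) :
    |((M.step)^[t] c).2.2 - c.2.2| ≤ (t : ℤ) := by
  induction t with
  | zero => simp
  | succ n ih =>
      rw [Function.iterate_succ_apply']
      have h1 := pos_step_abs M ((M.step)^[n] c)
      calc |((M.step) ((M.step)^[n] c)).2.2 - c.2.2|
          ≤ |((M.step) ((M.step)^[n] c)).2.2 - ((M.step)^[n] c).2.2|
            + |((M.step)^[n] c).2.2 - c.2.2| := by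
              exact abs_sub_le _ _ _
        _ ≤ 1 + n := by rw [h1]; linarith
        _ = ((n + 1 : ℕ) : ℤ) := by push_cast; ring

lemma pos_lipschitz' (M : TuringMachine A Q) (c : Config A Q) (s t : ℕ) (hst : s ≤ t) :
    |((M.step)^[t] c).2.2 - ((M.step)^[s] c).2.2| ≤ ((t - s : ℕ) : ℤ) := by
  have h := pos_lipschitz M ((M.step)^[s] c) (t - s)
  rw [← Function.iterate_add_apply, show t - s + s = t by omega] at h
  exact h

/-- agreement of configurations on a ball of radius ρ around 0 -/
def Agree (ρ : ℤ) (c c' : Config A Q) : Prop :=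
  c.2.1 = c'.2.1 ∧ c.2.2 = c'.2.2 ∧ ∀ k : ℤ, |k| ≤ ρ → c.1 k = c'.1 k

lemma Agree.step {ρ : ℤ} {c c' : Config A Q} (M : TuringMachine A Q)
    (hag : Agree ρ c c') (hpos : |c.2.2| ≤ ρ) : Agree ρ (M.step c) (M.step c') := by
  obtain ⟨hq, hp, ht⟩ := hag
  have hread : c.1 c.2.2 = c'.1 c'.2.2 := by rw [← hp]; exact ht _ hpos
  rw [step_eq, step_eq, ← hread, ← hq, ← hp]
  exact ⟨rfl, rfl, fun k hk => by
    simp only [Function.update_apply]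
    by_cases hkp : k = c.2.2
    · rw [if_pos hkp, if_pos hkp]
    · rw [if_neg hkp, if_neg hkp]; exact ht k hk⟩

lemma Agree.col {ρ : ℤ} {c c' : Config A Q} (hag : Agree ρ c c') (hρ : 0 ≤ ρ) :
    ofConfig c 0 = ofConfig c' 0 := by
  obtain ⟨hq, hp, ht⟩ := hag
  have h0 : c.1 0 = c'.1 0 := ht 0 (by simpa using hρ)
  simp only [ofConfig, ← hp, ← hq, h0]

lemma isHead_ofConfig_zero (c : Config A Q) : isHead (ofConfig c 0) ↔ c.2.2 = 0 := by
  constructor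
  · intro ⟨p, hp⟩
    by_contra h
    rw [show ofConfig c 0 = Sum.inl (c.1 0) from if_neg (by omega : ¬ (0:ℤ) = c.2.2)] at hp
    exact absurd hp (by simp)
  · intro h
    refine ⟨(c.1 0, c.2.1), ?_⟩
    simp [ofConfig, h.symm]

/-- key periodicity lemma: if the trajectory returns to an identical local
configuration and stays in the ball meanwhile, it is periodic forever. -/
lemma region_periodic (M : TuringMachine A Q) (c : Config A Q) (ρ : ℤ) (t1 t2 : ℕ)
    (h12 : t1 < t2)
    (hagree : Agree ρ ((M.step)^[t1] c) ((M.step)^[t2] c))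
    (hconf : ∀ s, t1 ≤ s → s ≤ t2 → |((M.step)^[s] c).2.2| ≤ ρ - 1) :
    ∀ s : ℕ, Agree ρ ((M.step)^[t1 + s] c) ((M.step)^[t1 + s + (t2 - t1)] c)
      ∧ |((M.step)^[t1 + s] c).2.2| ≤ ρ - 1 := by
  intro s
  induction s using Nat.strong_induction_on with
  | _ s ih =>
    rcases Nat.eq_zero_or_pos s with hs | hs
    · subst hs
      constructor
      · simpa only [Nat.add_zero, Nat.add_sub_cancel' (le_of_lt h12)] using hagree
      · simpa using hconf t1 le_rfl (le_of_lt h12)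
    · obtain ⟨s', rfl⟩ : ∃ s', s = s' + 1 := ⟨s - 1, by omega⟩
      have ihs := ih s' (by omega)
      constructor
      · have := Agree.step M ihs.1 (by linarith [ihs.2])
        rw [← Function.iterate_succ_apply' M.step (t1 + s'),
          ← Function.iterate_succ_apply' M.step (t1 + s' + (t2 - t1))] at this
        have e1 : (t1 + s').succ = t1 + (s' + 1) := by omega
        have e2 : (t1 + s' + (t2 - t1)).succ = t1 + (s' + 1) + (t2 - t1) := by omega
        rwa [e1, e2] at this
      · by_cases hcase : s' + 1 ≤ t2 - t1
        · exact hconf (t1 + (s' + 1)) (by omega) (by omega)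
        · have ihs2 := ih (s' + 1 - (t2 - t1)) (by omega)
          have hpos := ihs2.1.2.1
          have e3 : t1 + (s' + 1 - (t2 - t1)) + (t2 - t1) = t1 + (s' + 1) := by omega
          rw [e3] at hpos
          rw [← hpos]
          exact ihs2.2

variable (A Q) in
/-- number of local configurations in the ball of radius G+1 -/
noncomputable def RR [Fintype A] [Fintype Q] (G : ℕ) : ℕ :=
  Fintype.card ((↥(Finset.Icc (-(G+1 : ℤ)) (G+1)) → A) × Q)

variable (A Q) in
/-- threshold for the forcing lemma -/
noncomputable def fK [Fintype A] [Fintype Q] (G p ta : ℕ) : ℕ :=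
  ta + (RR A Q G + 2) * (G + 2) * (p + 2) + 4 * G + 10

lemma forcing [Fintype A] [Fintype Q] (M : TuringMachine A Q)
    (y : ℕ → Cell A Q) (G p ta : ℕ) (hp : 0 < p)
    (HG : ∀ j : ℕ, ∃ h, j ≤ h ∧ h ≤ j + G ∧ isHead (y h))
    (hyper : ∀ j, ta ≤ j → y (j + p) = y j)
    (hy0 : isHead (y 0))
    (f : ℕ → Cell A Q) (L0 Ln : ℕ) (hL0Ln : L0 ≤ Ln)
    (hagree : ∀ idx, idx < L0 → f idx = y idx)
    (hK : fK A Q G p ta ≤ L0)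
    (hmem : (List.range Ln).map f ∈ M.langSH) :
    ∀ idx, idx < Ln → f idx = y idx := by
  classical
  set RRv := RR A Q G with hRR
  set T2 := RRv * (G + 1) + G with hT2
  have hKval : fK A Q G p ta = ta + (RRv + 2) * (G + 2) * (p + 2) + 4 * G + 10 := rfl
  have hKT : T2 + G + 2 ≤ fK A Q G p ta := by
    rw [hKval, hT2]
    nlinarith [Nat.zero_le RRv, Nat.zero_le G, Nat.zero_le p]
  have hKbig : T2 * p + T2 + ta + G + 10 ≤ fK A Q G p ta := by
    rw [hKval, hT2]
    nlinarith [Nat.zero_le RRv, Nat.zero_le G, Nat.zero_le p]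
  obtain ⟨xh, hX, m, hcol⟩ := hmem
  have hcol' : ∀ j, j < Ln → f j = ((M.hstep)^[j] ((M.hstep)^[m] xh)) 0 := by
    intro j hj
    have hj' : j < ((List.range Ln).map f).length := by simpa using hj
    have h := hcol j hj'
    rw [List.get_eq_getElem, List.getElem_map, List.getElem_range] at h
    rw [h, tauH, Nat.add_comm m j, Function.iterate_add_apply]
  set z := (M.hstep)^[m] xh with hzdef
  have hXz : XHmem z := XHmem_hstep_iterate M hX m
  have hL0pos : 0 < L0 := by omega
  have hy0' : ∃ b q, z 0 = Sum.inr (b, q) := by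
    have hf0 : f 0 = y 0 := hagree 0 hL0pos
    have h0 : f 0 = z 0 := by simpa using hcol' 0 (lt_of_lt_of_le hL0pos hL0Ln)
    obtain ⟨pq, hpq⟩ := hy0
    exact ⟨pq.1, pq.2, by rw [← h0, hf0, hpq]⟩
  obtain ⟨b0, q0, hzb⟩ := hy0'
  set cc : Config A Q := (fun k => extractCell (z k), q0, 0) with hcc
  have hzc : z = ofConfig cc := eq_ofConfig_of_head hXz hzb
  set Φ : ℕ → Config A Q := fun t => (M.step)^[t] cc with hΦ
  have hfΦ : ∀ j, j < Ln → f j = ofConfig (Φ j) 0 := by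
    intro j hj
    rw [hcol' j hj, hzc, hstep_iterate_ofConfig]
  have hpos0 : ∀ h, h < L0 → isHead (y h) → (Φ h).2.2 = 0 := by
    intro h hh hy
    have : isHead (f h) := by rwa [hagree h hh]
    rw [hfΦ h (lt_of_lt_of_le hh hL0Ln)] at this
    exact (isHead_ofConfig_zero _).1 this
  have hconf : ∀ s, s + G < L0 → |(Φ s).2.2| ≤ (G : ℤ) := by
    intro s hs
    obtain ⟨h, hsh, hhG, hyh⟩ := HG s
    have h0 : (Φ h).2.2 = 0 := hpos0 h (by omega) hyh
    have hl := pos_lipschitz' M cc s h hsh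
    calc |(Φ s).2.2| = |(Φ h).2.2 - (Φ s).2.2| := by rw [h0, zero_sub, abs_neg]
      _ ≤ ((h - s : ℕ) : ℤ) := hl
      _ ≤ (G : ℤ) := by exact_mod_cast (by omega : h - s ≤ G)
  -- visit times
  choose vh hvh1 hvh2 hvh3 using fun i : ℕ => HG (i * (G + 1))
  have hvhmono : ∀ a b : ℕ, a < b → vh a < vh b := by
    intro a b hab
    have e : (a + 1) * (G + 1) = a * (G + 1) + (G + 1) := by ring
    have h1 : (a + 1) * (G + 1) ≤ b * (G + 1) := Nat.mul_le_mul_right _ (by omega)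
    have := hvh2 a
    have := hvh1 b
    omega
  have hvhle : ∀ i : ℕ, i ≤ RRv → vh i ≤ T2 := by
    intro i hi
    have h1 : i * (G + 1) ≤ RRv * (G + 1) := Nat.mul_le_mul_right _ hi
    have := hvh2 i
    omega
  have hvh0 : ∀ i : ℕ, i ≤ RRv → (Φ (vh i)).2.2 = 0 := by
    intro i hi
    exact hpos0 (vh i) (by have := hvhle i hi; omega) (hvh3 i)
  have hmain : ∃ t1 t2, t1 < t2 ∧ t2 ≤ T2 ∧ Agree (G + 1) (Φ t1) (Φ t2) := by
    have hcard : Fintype.card ((↥(Finset.Icc (-(G+1 : ℤ)) (G+1)) → A) × Q)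
        < Fintype.card (Fin (RRv + 1)) := by
      rw [Fintype.card_fin]
      exact Nat.lt_succ_of_le (le_of_eq rfl)
    obtain ⟨i1, i2, hne, heq⟩ := Fintype.exists_ne_map_eq_of_card_lt
      (fun i : Fin (RRv + 1) =>
        ((fun k : ↥(Finset.Icc (-(G+1 : ℤ)) (G+1)) => (Φ (vh i)).1 k.1),
          (Φ (vh i)).2.1)) hcard
    have build : ∀ a b : Fin (RRv + 1), a < b →
        ((fun k : ↥(Finset.Icc (-(G+1 : ℤ)) (G+1)) => (Φ (vh a)).1 k.1), (Φ (vh a)).2.1)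
        = ((fun k : ↥(Finset.Icc (-(G+1 : ℤ)) (G+1)) => (Φ (vh b)).1 k.1), (Φ (vh b)).2.1) →
        ∃ t1 t2, t1 < t2 ∧ t2 ≤ T2 ∧ Agree (G + 1) (Φ t1) (Φ t2) := by
      intro a b hab habeq
      refine ⟨vh a, vh b, hvhmono a b hab, hvhle b (Fin.is_le b), ?_, ?_, ?_⟩
      · exact congrArg Prod.snd habeq
      · rw [hvh0 a (Fin.is_le a), hvh0 b (Fin.is_le b)]
      · intro k hk
        have hkmem : k ∈ Finset.Icc (-(G+1 : ℤ)) (G+1) := Finset.mem_Icc.mpr (abs_le.mp hk)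
        exact congrFun (congrArg Prod.fst habeq) ⟨k, hkmem⟩
    rcases hne.lt_or_gt with hlt | hlt
    · exact build i1 i2 hlt heq
    · exact build i2 i1 hlt heq.symm
  obtain ⟨t1, t2, h12, ht2T2, hagr⟩ := hmain
  set c0 := t2 - t1 with hc0
  have hc0pos : 0 < c0 := by omega
  have hconf2 : ∀ s, t1 ≤ s → s ≤ t2 → |(Φ s).2.2| ≤ (G + 1 : ℤ) - 1 := by
    intro s hs1 hs2
    have h1 : |(Φ s).2.2| ≤ (G : ℤ) := hconf s (by omega)
    linarith
  have hper := region_periodic M cc (G + 1) t1 t2 h12 hagr hconf2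
  have hgper : ∀ n, t1 ≤ n → ofConfig (Φ n) 0 = ofConfig (Φ (n + c0)) 0 := by
    intro n hn
    have h1 := (hper (n - t1)).1
    rw [show t1 + (n - t1) = n by omega, show n + (t2 - t1) = n + c0 by omega] at h1
    exact h1.col (by positivity)
  have hgper' : ∀ k n, t1 ≤ n → ofConfig (Φ (n + k * c0)) 0 = ofConfig (Φ n) 0 := by
    intro k
    induction k with
    | zero => intro n _; simp
    | succ k ih =>
        intro n hn
        have h1 := ih n hn
        have h2 := hgper (n + k * c0) (by omega)
        rw [show n + (k + 1) * c0 = n + k * c0 + c0 by ring, ← h2, h1]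
  have hyper' : ∀ k j, ta ≤ j → y (j + k * p) = y j := by
    intro k
    induction k with
    | zero => intro j _; simp
    | succ k ih =>
        intro j hj
        have h1 := ih j hj
        have h2 := hyper (j + k * p) (by omega)
        rw [show j + (k + 1) * p = j + k * p + p by ring, h2, h1]
  -- main strong induction
  intro idx
  induction idx using Nat.strong_induction_on with
  | _ idx ihidx =>
    intro hidx
    by_cases hcase : idx < L0
    · exact hagree idx hcase
    · have hidxL0 : L0 ≤ idx := by omega
      have hc0T : c0 ≤ T2 := by omega
      have ht1T : t1 ≤ T2 := by omega
      have hmul : c0 * p ≤ T2 * p := Nat.mul_le_mul_right _ hc0T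
      have hone : 1 ≤ c0 * p := by
        have := Nat.mul_le_mul hc0pos hp
        omega
      set idx' := idx - c0 * p with hidx'def
      have hdrop : c0 * p ≤ idx := by omega
      have hidx'lt : idx' < idx := by omega
      have hidx't1 : t1 ≤ idx' := by omega
      have hidx'ta : ta ≤ idx' := by omega
      have e1 : ofConfig (Φ idx) 0 = ofConfig (Φ idx') 0 := by
        have h1 := hgper' p idx' hidx't1
        rw [show idx' + p * c0 = idx by rw [Nat.mul_comm]; omega] at h1
        exact h1
      have e2 : y idx' = y idx := by
        have h1 := hyper' c0 idx' hidx'ta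
        rw [show idx' + c0 * p = idx by omega] at h1
        exact h1.symm
      rw [hfΦ idx hidx, e1, ← hfΦ idx' (by omega), ihidx idx' hidx'lt (by omega), ← e2]

lemma list_split (g : ℕ → Cell A Q) (a b : ℕ) :
    (List.range (a + b)).map g
      = (List.range a).map g ++ (List.range b).map (fun s => g (a + s)) := by
  rw [List.range_add, List.map_append, List.map_map]
  rfl

end TuringMachine

open TuringMachine in
theorem no_NCycle_of_sofic_SH'
    {A Q : Type*} [Fintype A] [Fintype Q]
    (M : TuringMachine A Q) (N : ℕ)
    (σ : Type*) [Fintype σ] (hcard : Fintype.card σ = N)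
    (D : DFA (TuringMachine.Cell A Q) σ)
    (hacc : D.accepts = M.langSH) :
    ∀ (x : TuringMachine.Config A Q) (i : ℤ), ¬ M.NCycle N N x i := by
  classical
  intro x i hcyc
  rcases Nat.eq_zero_or_pos N with hN0 | hNpos
  · have : IsEmpty σ := Fintype.card_eq_zero_iff.mp (by omega)
    exact this.elim D.start
  obtain ⟨ts, hts0, htsmono, hvisit, hfar⟩ := hcyc
  set x0 : Config A Q := transl x i with hx0
  set Φx : ℕ → Config A Q := fun t => (M.step)^[t] x0 with hΦx
  set col : ℕ → Cell A Q := fun n => ofConfig (Φx n) 0 with hcoldef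
  have hposx : ∀ t, (Φx t).2.2 = M.pos t x - i := by
    intro t
    show ((M.step)^[t] (transl x i)).2.2 = _
    rw [iterate_step_transl]
    rfl
  have hvisit0 : ∀ q, q ≤ N → (Φx (ts (2*q))).2.2 = 0 := by
    intro q hq
    rw [hposx, hvisit q hq]
    ring
  have hcolhead : ∀ n, isHead (col n) ↔ (Φx n).2.2 = 0 := fun n => isHead_ofConfig_zero _
  have hcolmem : ∀ n, (List.range n).map col ∈ M.langSH := by
    intro n
    refine ⟨ofConfig x0, XHmem_ofConfig _, 0, ?_⟩
    intro j hj
    rw [List.get_eq_getElem, List.getElem_map, List.getElem_range, zero_add, tauH_ofConfig]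
  have htsle : ∀ a b, a ≤ b → b ≤ 2*N → ts a ≤ ts b := by
    intro a b hab hb
    induction b, hab using Nat.le_induction with
    | base => exact le_rfl
    | succ n hn ih =>
        exact le_trans (ih (by omega)) (le_of_lt (htsmono n (by omega)))
  have htslt : ∀ a b, a < b → b ≤ 2*N → ts a < ts b := by
    intro a b hab hb
    exact lt_of_lt_of_le (htsmono a (by omega)) (htsle (a+1) b (by omega) hb)
  -- pigeonhole 1 : equal DFA states among the return times
  obtain ⟨q1, q2, hqlt, hq2N, hseq⟩ : ∃ q1 q2 : ℕ, q1 < q2 ∧ q2 ≤ N ∧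
      D.eval ((List.range (ts (2*q1))).map col) = D.eval ((List.range (ts (2*q2))).map col) := by
    obtain ⟨a, b, hne, heq⟩ := Fintype.exists_ne_map_eq_of_card_lt
      (fun q : Fin (N+1) => D.eval ((List.range (ts (2*(q : ℕ)))).map col))
      (by rw [hcard, Fintype.card_fin]; omega)
    rcases hne.lt_or_gt with hlt | hlt
    · exact ⟨a, b, hlt, Fin.is_le b, heq⟩
    · exact ⟨b, a, hlt, Fin.is_le a, heq.symm⟩
  set tA := ts (2*q1) with htA
  set tB := ts (2*q2) with htB
  have htAB : tA < tB := htslt _ _ (by omega) (by omega)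
  set pp := tB - tA with hpp
  have hppos : 0 < pp := by omega
  set yy : ℕ → Cell A Q := fun j => if j < tA then col j else col (tA + (j - tA) % pp) with hyy
  have hyycol : ∀ j, j < tB → yy j = col j := by
    intro j hj
    simp only [hyy]
    by_cases h : j < tA
    · rw [if_pos h]
    · rw [if_neg h, Nat.mod_eq_of_lt (by omega), show tA + (j - tA) = j by omega]
  have hyyper : ∀ j, tA ≤ j → yy (j + pp) = yy j := by
    intro j hj
    simp only [hyy]
    simp only [if_neg (show ¬ j + pp < tA by omega), if_neg (show ¬ j < tA by omega)]
    rw [show j + pp - tA = (j - tA) + pp by omega, Nat.add_mod_right]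
  have hyyper' : ∀ j, tA ≤ j → yy j = col (tA + (j - tA) % pp) := by
    intro j hj
    simp only [hyy]
    rw [if_neg (show ¬ j < tA by omega)]
  -- the word map yy (range n) is accepted for every n
  have haccy : ∀ n, (List.range n).map yy ∈ D.accepts := by
    intro n
    induction n using Nat.strong_induction_on with
    | _ n ihn =>
      by_cases hn : n ≤ tB
      · have : (List.range n).map yy = (List.range n).map col :=
          List.map_congr_left (fun a ha => hyycol a (by
            have := List.mem_range.mp ha; omega))
        rw [this, hacc]
        exact hcolmem n
      · have hyA : (List.range tA).map yy = (List.range tA).map col :=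
          List.map_congr_left (fun a ha => hyycol a (by
            have := List.mem_range.mp ha; omega))
        have hyB : (List.range (tA + pp)).map yy = (List.range tB).map col := by
          rw [show tA + pp = tB by omega]
          exact List.map_congr_left (fun a ha => hyycol a (List.mem_range.mp ha))
        have hevalAB : D.eval ((List.range (tA + pp)).map yy)
            = D.eval ((List.range tA).map yy) := by
          rw [hyA, hyB, ← hseq]
        have hevalstep : D.eval ((List.range n).map yy)
            = D.eval ((List.range (n - pp)).map yy) := by
          have e1 : n = (tA + pp) + (n - tA - pp) := by omega
          have e2 : n - pp = tA + (n - tA - pp) := by omega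
          conv_lhs => rw [e1, list_split]
          conv_rhs => rw [e2, list_split]
          show D.evalFrom D.start _ = D.evalFrom D.start _
          rw [DFA.evalFrom_of_append, DFA.evalFrom_of_append]
          have hsfx : (List.range (n - tA - pp)).map (fun s => yy (tA + pp + s))
              = (List.range (n - tA - pp)).map (fun s => yy (tA + s)) := by
            refine List.map_congr_left (fun a _ => ?_)
            rw [show tA + pp + a = (tA + a) + pp by omega]
            exact hyyper (tA + a) (by omega)
          rw [hsfx]
          exact congrArg (fun st => D.evalFrom st ((List.range (n - tA - pp)).map (fun s => yy (tA + s)))) hevalAB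
        rw [DFA.mem_accepts, hevalstep, ← DFA.mem_accepts]
        exact ihn (n - pp) (by omega)
  -- setup for forcing
  set GG := tB + pp with hGG
  have hyhead : isHead (yy 0) := by
    have h00 : (Φx 0).2.2 = 0 := by
      have h1 := hvisit 0 (by omega)
      rw [Nat.mul_zero, hts0] at h1
      rw [hposx, h1]
      ring
    have : yy 0 = col 0 := hyycol 0 (by omega)
    rw [this]
    exact (hcolhead 0).2 h00
  have HGy : ∀ j : ℕ, ∃ h, j ≤ h ∧ h ≤ j + GG ∧ isHead (yy h) := by
    intro j
    have hheadA : isHead (yy tA) := by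
      rw [hyycol tA htAB]
      exact (hcolhead tA).2 (hvisit0 q1 (by omega))
    by_cases hj : j ≤ tA
    · exact ⟨tA, hj, by omega, hheadA⟩
    · set k := (j - tA) / pp + 1 with hk
      have hdm := Nat.div_add_mod (j - tA) pp
      have hmlt : (j - tA) % pp < pp := Nat.mod_lt _ hppos
      have e : pp * k = pp * ((j - tA)/pp) + pp := by ring
      refine ⟨tA + pp * k, by omega, by omega, ?_⟩
      have hmod : (tA + pp * k - tA) % pp = 0 := by
        rw [show tA + pp * k - tA = pp * k by omega, Nat.mul_mod_right]
      rw [hyyper' (tA + pp * k) (by omega), hmod, Nat.add_zero]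
      exact (hcolhead tA).2 (hvisit0 q1 (by omega))
  -- pigeonhole 2 on the eventually periodic word yy
  set KK := fK A Q GG pp tA with hKK
  obtain ⟨r1, r2, hrlt, hr2N, hreq⟩ : ∃ r1 r2 : ℕ, r1 < r2 ∧ r2 ≤ N ∧
      D.eval ((List.range (KK + r1)).map yy) = D.eval ((List.range (KK + r2)).map yy) := by
    obtain ⟨a, b, hne, heq⟩ := Fintype.exists_ne_map_eq_of_card_lt
      (fun r : Fin (N+1) => D.eval ((List.range (KK + (r : ℕ))).map yy))
      (by rw [hcard, Fintype.card_fin]; omega)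
    rcases hne.lt_or_gt with hlt | hlt
    · exact ⟨a, b, hlt, Fin.is_le b, heq⟩
    · exact ⟨b, a, hlt, Fin.is_le a, heq.symm⟩
  set tt := KK + r1 with htt
  set tt' := KK + r2 with htt'
  set cδ := r2 - r1 with hcδ
  have hcδpos : 0 < cδ := by omega
  have hcδN : cδ ≤ N := by omega
  -- the key periodicity of period cδ from time tt on
  have hyc : ∀ j : ℕ, yy (tt + j) = yy (tt' + j) := by
    intro j
    set ff : ℕ → Cell A Q := fun idx => if idx < tt' then yy idx else yy (idx - tt' + tt) with hff
    have hword : (List.range (tt' + (j+1))).map ff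
        = (List.range tt').map yy ++ (List.range (j+1)).map (fun s => yy (tt + s)) := by
      rw [list_split]
      congr 1
      · exact List.map_congr_left (fun a ha => by
          simp only [hff]
          rw [if_pos (List.mem_range.mp ha)])
      · refine List.map_congr_left (fun a _ => ?_)
        simp only [hff]
        simp only [if_neg (show ¬ tt' + a < tt' by omega)]
        rw [show tt' + a - tt' + tt = tt + a by omega]
    have hmemY : (List.range (tt' + (j+1))).map ff ∈ M.langSH := by
      rw [← hacc, DFA.mem_accepts, hword]
      show D.evalFrom D.start _ ∈ _
      rw [DFA.evalFrom_of_append]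
      have hkey : D.evalFrom (D.evalFrom D.start ((List.range tt').map yy))
            ((List.range (j+1)).map (fun s => yy (tt + s)))
          = D.evalFrom D.start ((List.range (tt + (j+1))).map yy) := by
        have h1 : D.evalFrom D.start ((List.range tt').map yy)
            = D.evalFrom D.start ((List.range tt).map yy) := hreq.symm
        rw [h1, ← DFA.evalFrom_of_append]
        conv_rhs => rw [list_split]
      rw [hkey]
      exact (DFA.mem_accepts D).mp (haccy (tt + (j+1)))
    have hforce := forcing M yy GG pp tA hppos HGy hyyper hyhead ff tt' (tt' + (j+1))
      (by omega)
      (fun idx hidx => by simp only [hff]; rw [if_pos hidx])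
      (by rw [← hKK]; omega)
      hmemY
    have hres := hforce (tt' + j) (by omega)
    simp only [hff] at hres
    simp only [if_neg (show ¬ tt' + j < tt' by omega)] at hres
    rw [show tt' + j - tt' + tt = tt + j by omega] at hres
    exact hres
  -- the inner big gap inside [tA, tB)
  set m1 := ts (2*q1 + 1) with hm1
  have hq1N : q1 < N := by omega
  have hm1far : (N:ℤ) < |(Φx m1).2.2| := by
    rw [hposx]
    exact hfar q1 hq1N
  have hm1ne : (Φx m1).2.2 ≠ 0 := by
    intro h
    rw [h] at hm1far
    simp at hm1far
    omega
  have htAm1 : tA < m1 := htslt (2*q1) (2*q1+1) (by omega) (by omega)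
  have hm1tB : m1 < tB := htslt (2*q1+1) (2*q2) (by omega) (by omega)
  set P : ℕ → Prop := fun s => (Φx s).2.2 = 0 with hP
  have hPA : P tA := hvisit0 q1 (by omega)
  have hPB : P tB := hvisit0 q2 hq2N
  have hpre1 : P (Nat.findGreatest P m1) := Nat.findGreatest_spec (le_of_lt htAm1) hPA
  set hpre := Nat.findGreatest P m1 with hhpre
  have hpretA : tA ≤ hpre := Nat.le_findGreatest (le_of_lt htAm1) hPA
  have hprem1 : hpre ≤ m1 := Nat.findGreatest_le m1
  have hprelt : hpre < m1 := by
    rcases Nat.lt_or_ge hpre m1 with h | h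
    · exact h
    · exfalso; exact hm1ne (by rw [show m1 = hpre by omega]; exact hpre1)
  have hgreat : ∀ s, hpre < s → s ≤ m1 → ¬ P s := fun s h1 h2 =>
    Nat.findGreatest_is_greatest h1 h2
  have hexfind : ∃ d, P (hpre + 1 + d) :=
    ⟨tB - (hpre+1), by rw [show hpre+1+(tB-(hpre+1)) = tB by omega]; exact hPB⟩
  set dd := Nat.find hexfind with hdd
  set hpost := hpre + 1 + dd with hhpost
  have hpost1 : P hpost := Nat.find_spec hexfind
  have hpostmin : ∀ s, hpre < s → s < hpost → ¬ P s := by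
    intro s h1 h2 hPs
    have hmin := Nat.find_min hexfind (m := s - hpre - 1) (by omega)
    rw [show hpre + 1 + (s - hpre - 1) = s by omega] at hmin
    exact hmin hPs
  have hposttB : hpost ≤ tB := by
    have : dd ≤ tB - (hpre+1) := Nat.find_min' hexfind (by
      rw [show hpre+1+(tB-(hpre+1)) = tB by omega]; exact hPB)
    omega
  have hm1hpost : m1 < hpost := by
    rcases Nat.lt_or_ge m1 hpost with h | h
    · exact h
    · exfalso
      exact hgreat hpost (by omega) h hpost1
  -- gap bounds via Lipschitz
  have hgap1n : N + 1 ≤ m1 - hpre := by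
    have hl := pos_lipschitz' M x0 hpre m1 (le_of_lt hprelt)
    have h0 : ((M.step)^[hpre] x0).2.2 = 0 := hpre1
    rw [h0, sub_zero] at hl
    have hz : (N:ℤ) < ((m1 - hpre : ℕ) : ℤ) := lt_of_lt_of_le hm1far hl
    omega
  have hgap2n : N + 1 ≤ hpost - m1 := by
    have hl := pos_lipschitz' M x0 m1 hpost (le_of_lt hm1hpost)
    have h0 : ((M.step)^[hpost] x0).2.2 = 0 := hpost1
    rw [h0, zero_sub, abs_neg] at hl
    have hz : (N:ℤ) < ((hpost - m1 : ℕ) : ℤ) := lt_of_lt_of_le hm1far hl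
    omega
  have hgapn : 2*N + 2 ≤ hpost - hpre := by omega
  set HH := hpre + pp * tt with hHH
  have hHtt : tt ≤ HH := by
    have := Nat.le_mul_of_pos_left tt hppos
    omega
  have hmodH : (HH - tA) % pp = hpre - tA := by
    rw [show HH - tA = (hpre - tA) + pp * tt by omega, Nat.add_mul_mod_self_left]
    exact Nat.mod_eq_of_lt (by omega)
  have hyH : yy HH = col hpre := by
    rw [hyyper' HH (by omega), hmodH, show tA + (hpre - tA) = hpre by omega]
  have hmodHc : (HH + cδ - tA) % pp = hpre + cδ - tA := by
    rw [show HH + cδ - tA = (hpre + cδ - tA) + pp * tt by omega, Nat.add_mul_mod_self_left]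
    exact Nat.mod_eq_of_lt (by omega)
  have hyHc : yy (HH + cδ) = col (hpre + cδ) := by
    rw [hyyper' (HH + cδ) (by omega), hmodHc, show tA + (hpre + cδ - tA) = hpre + cδ by omega]
  have hyeq : yy HH = yy (HH + cδ) := by
    have h1 := hyc (HH - tt)
    rw [show tt + (HH - tt) = HH by omega, show tt' + (HH - tt) = HH + cδ by omega] at h1
    exact h1
  have hheadH : isHead (col hpre) := (hcolhead hpre).2 hpre1
  have hnot : ¬ isHead (col (hpre + cδ)) := by
    intro hh
    exact hpostmin (hpre + cδ) (by omega) (by omega) ((hcolhead _).1 hh)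
  exact hnot (by rw [← hyHc, ← hyeq, hyH]; exact hheadH)

/-- If the column subshift S_H is recognized by a finite (deterministic)
automaton with N states, then the machine cannot make an N-cycle of width N on
any configuration; in particular it is n-bounded-cycle for some n. -/
theorem no_NCycle_of_sofic_SH
    {A Q : Type*} [Fintype A] [Fintype Q]
    (M : TuringMachine A Q) (N : ℕ)
    (σ : Type*) [Fintype σ] (hcard : Fintype.card σ = N)
    (D : DFA (TuringMachine.Cell A Q) σ)
    (hacc : D.accepts = M.langSH) :
    ∀ (x : TuringMachine.Config A Q) (i : ℤ), ¬ M.NCycle N N x i := by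
  exact no_NCycle_of_sofic_SH' M N σ hcard D hacc
end

section
/- Let F : A^ℤ → A^ℤ be a cellular automaton (continuous and shift-commuting). Then F is equicontinuous if and only if F is preperiodic, i.e., there exist q ≥ 0 and p > 0 with F^{q+p} = F^q. -/
/-- Uniform locality: a continuous map from `ℤ → A` (A finite discrete) to `A`
depends only on a finite central window. -/
lemma uniform_window_lemma {A : Type*} [Fintype A] [TopologicalSpace A] [DiscreteTopology A]
    (f : (ℤ → A) → A) (hf : Continuous f) :
    ∃ m : ℕ, ∀ x y : ℤ → A, (∀ i : ℤ, |i| ≤ (m : ℤ) → x i = y i) → f x = f y := by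
  have key : ∀ x : ℤ → A, ∃ m : ℕ, ∀ y : ℤ → A,
      (∀ i : ℤ, |i| ≤ (m : ℤ) → x i = y i) → f y = f x := by
    intro x
    have h1 : f ⁻¹' {f x} ∈ nhds x :=
      hf.continuousAt.preimage_mem_nhds ((isOpen_discrete {f x}).mem_nhds rfl)
    rw [nhds_pi, Filter.mem_pi] at h1
    obtain ⟨I, hIfin, t, ht, hsub⟩ := h1
    refine ⟨hIfin.toFinset.sup (fun i => i.natAbs), ?_⟩
    intro y hy
    have hyI : y ∈ I.pi t := by
      intro i hi
      have hxi : x i ∈ t i := by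
        have := ht i
        rwa [nhds_discrete, Filter.mem_pure] at this
      have hnat : i.natAbs ≤ hIfin.toFinset.sup (fun i => i.natAbs) :=
        Finset.le_sup (hIfin.mem_toFinset.mpr hi)
      have hbound : |i| ≤ ((hIfin.toFinset.sup (fun i => i.natAbs) : ℕ) : ℤ) := by
        rw [Int.abs_eq_natAbs]; exact_mod_cast hnat
      rw [hy i hbound] at hxi
      exact hxi
    exact hsub hyI
  choose m hm using key
  set V : (ℤ → A) → Set (ℤ → A) := fun x => {y | ∀ i : ℤ, |i| ≤ (m x : ℤ) → y i = x i} with hV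
  have hVopen : ∀ x, IsOpen (V x) := by
    intro x
    have hVe : V x = ⋂ i ∈ Finset.Icc (-(m x : ℤ)) (m x : ℤ), {y : ℤ → A | y i = x i} := by
      ext y
      simp only [hV, Set.mem_iInter, Finset.mem_Icc, Set.mem_setOf_eq]
      constructor
      · intro h i hi; exact h i (abs_le.mpr hi)
      · intro h i hi; exact h i (abs_le.mp hi)
    rw [hVe]
    refine isOpen_biInter_finset fun i _ => ?_
    have : IsOpen ((fun y : ℤ → A => y i) ⁻¹' {x i}) :=
      (continuous_apply i).isOpen_preimage _ (isOpen_discrete _)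
    exact this
  have hcover : (Set.univ : Set (ℤ → A)) ⊆ ⋃ x : ℤ → A, V x :=
    fun z _ => Set.mem_iUnion.mpr ⟨z, fun i _ => rfl⟩
  obtain ⟨s, hs⟩ := isCompact_univ.elim_finite_subcover V hVopen hcover
  refine ⟨s.sup (fun z => m z), ?_⟩
  intro x y hxy
  obtain ⟨z, hzs, hxz⟩ : ∃ z ∈ s, x ∈ V z := by
    have := hs (Set.mem_univ x); simpa using this
  have hle : m z ≤ s.sup (fun z => m z) := Finset.le_sup hzs
  have hmz : (m z : ℤ) ≤ ((s.sup (fun z => m z) : ℕ) : ℤ) := by exact_mod_cast hle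
  have hyz : y ∈ V z := by
    intro i hi
    rw [← hxy i (le_trans hi hmz)]; exact hxz i hi
  have h1 : f x = f z := hm z x (fun i hi => (hxz i hi).symm)
  have h2 : f y = f z := hm z y (fun i hi => (hyz i hi).symm)
  rw [h1, h2]

/-- A cellular automaton (a continuous shift-commuting self-map of A^ℤ, A finite
discrete) is equicontinuous if and only if it is preperiodic.  Equicontinuity is
expressed through the cylinder metric d(x,y) = 2^{-min{|i| : x_i ≠ y_i}}. -/
theorem cellularAutomaton_equicontinuous_iff_preperiodic
    {A : Type*} [Fintype A] [TopologicalSpace A] [DiscreteTopology A]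
    (F : (ℤ → A) → (ℤ → A)) (hcont : Continuous F)
    (hshift : ∀ x : ℤ → A, F (fun i => x (i + 1)) = fun i => F x (i + 1)) :
    (∀ k : ℕ, ∃ m : ℕ, ∀ x y : ℤ → A,
        (∀ i : ℤ, |i| ≤ (m : ℤ) → x i = y i) →
        ∀ t : ℕ, ∀ j : ℤ, |j| ≤ (k : ℤ) → F^[t] x j = F^[t] y j) ↔
    (∃ q p : ℕ, 0 < p ∧ F^[q + p] = F^[q]) := by
  -- F commutes with all integer translations
  have hshiftZ : ∀ (n : ℤ) (x : ℤ → A), F (fun i => x (i + n)) = fun i => F x (i + n) := by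
    intro n
    induction n using Int.induction_on with
    | zero => intro x; simp
    | succ n ih =>
      intro x
      have e : (fun i : ℤ => x (i + ((n : ℤ) + 1))) = fun i : ℤ => (fun j => x (j + n)) (i + 1) := by
        funext i; simp only []; congr 1; ring
      rw [e, hshift (fun j => x (j + (n : ℤ)))]
      funext i
      simp only [ih x]
      congr 1; ring
    | pred n ih =>
      intro x
      have h1 := hshift (fun i => x (i + (-(n : ℤ) - 1)))
      have e : (fun i : ℤ => x (i + 1 + (-(n : ℤ) - 1))) = fun i : ℤ => x (i + -(n : ℤ)) := by
        funext i; congr 1; ring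
      rw [e, ih x] at h1
      funext j
      have h2 := congrFun h1 (j - 1)
      have e2 : j - 1 + 1 = j := by ring
      rw [e2] at h2
      show F (fun i => x (i + (-(n : ℤ) - 1))) j = F x (j + (-(n : ℤ) - 1))
      rw [← h2]
      congr 1; ring
  have hshift_iter : ∀ (t : ℕ) (n : ℤ) (x : ℤ → A),
      F^[t] (fun i => x (i + n)) = fun i => F^[t] x (i + n) := by
    intro t
    induction t with
    | zero => intro n x; simp
    | succ t ih =>
      intro n x
      rw [Function.iterate_succ_apply', ih n x, hshiftZ n (F^[t] x),
        Function.iterate_succ_apply']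
  constructor
  · -- equicontinuous → preperiodic
    intro h
    obtain ⟨m, hm⟩ := h 0
    by_cases hA : Nonempty A
    · obtain ⟨a⟩ := hA
      set W := Finset.Icc (-(m : ℤ)) (m : ℤ) with hW
      set ext : (W → A) → (ℤ → A) := fun w i => if h : i ∈ W then w ⟨i, h⟩ else a with hext
      set g : ℕ → ((W → A) → A) := fun t w => F^[t] (ext w) 0 with hg
      have hkey : ∀ (t : ℕ) (x : ℤ → A) (j : ℤ),
          F^[t] x j = g t (fun i => x (i.1 + j)) := by
        intro t x j
        have h1 : F^[t] (fun i => x (i + j)) 0 = F^[t] x j := by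
          rw [hshift_iter t j x]; simp
        have h2 : F^[t] (fun i => x (i + j)) 0
            = F^[t] (ext (fun i : W => x (i.1 + j))) 0 := by
          refine hm _ _ ?_ t 0 (by simp)
          intro i hi
          have hiW : i ∈ W := by
            rw [hW, Finset.mem_Icc]; exact abs_le.mp hi
          simp only [hext, hiW, dif_pos]
        rw [← h1, h2, hg]
      have hnoninj : ∃ t1 t2 : ℕ, t1 ≠ t2 ∧ g t1 = g t2 :=
        Finite.exists_ne_map_eq_of_infinite g
      obtain ⟨t1, t2, hne, heq⟩ := hnoninj
      rcases hne.lt_or_gt with hlt | hlt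
      · refine ⟨t1, t2 - t1, by omega, ?_⟩
        have ht : t1 + (t2 - t1) = t2 := by omega
        rw [ht]
        funext x j
        rw [hkey t2 x j, hkey t1 x j, heq]
      · refine ⟨t2, t1 - t2, by omega, ?_⟩
        have ht : t2 + (t1 - t2) = t1 := by omega
        rw [ht]
        funext x j
        rw [hkey t2 x j, hkey t1 x j, heq]
    · refine ⟨0, 1, one_pos, ?_⟩
      funext x
      exact absurd ⟨x 0⟩ hA
  · -- preperiodic → equicontinuous
    rintro ⟨q, p, hp, hqp⟩ k
    have hred : ∀ t : ℕ, ∃ s : ℕ, s < q + p ∧ F^[t] = F^[s] := by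
      intro t
      induction t using Nat.strong_induction_on with
      | _ t ih =>
        by_cases h : t < q + p
        · exact ⟨t, h, rfl⟩
        · push_neg at h
          have h2 : F^[t] = F^[t - p] := by
            calc F^[t] = F^[(t - (q + p)) + (q + p)] := by rw [show t - (q + p) + (q + p) = t from by omega]
              _ = F^[t - (q + p)] ∘ F^[q + p] := Function.iterate_add F _ _
              _ = F^[t - (q + p)] ∘ F^[q] := by rw [hqp]
              _ = F^[(t - (q + p)) + q] := (Function.iterate_add F _ _).symm
              _ = F^[t - p] := by rw [show t - (q + p) + q = t - p from by omega]
          obtain ⟨s, hs, hFs⟩ := ih (t - p) (by omega)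
          exact ⟨s, hs, h2.trans hFs⟩
    have hcs : ∀ s : ℕ, ∀ j : ℤ, ∃ m : ℕ, ∀ x y : ℤ → A,
        (∀ i : ℤ, |i| ≤ (m : ℤ) → x i = y i) → F^[s] x j = F^[s] y j := by
      intro s j
      refine uniform_window_lemma (fun x => F^[s] x j) ?_
      exact (continuous_apply j).comp (hcont.iterate s)
    choose M hM using hcs
    refine ⟨(Finset.range (q + p) ×ˢ Finset.Icc (-(k : ℤ)) (k : ℤ)).sup
      (fun sj => M sj.1 sj.2), ?_⟩
    intro x y hxy t j hj
    obtain ⟨s, hs, hFs⟩ := hred t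
    rw [hFs]
    refine hM s j x y ?_
    intro i hi
    refine hxy i (le_trans hi ?_)
    have hmem : (s, j) ∈ Finset.range (q + p) ×ˢ Finset.Icc (-(k : ℤ)) (k : ℤ) :=
      Finset.mem_product.mpr ⟨Finset.mem_range.mpr hs, Finset.mem_Icc.mpr (abs_le.mp hj)⟩
    exact_mod_cast Finset.le_sup (f := fun sj => M sj.1 sj.2) hmem
end
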